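/- Let 0 < a < 1/2 and let z_a be the unique z ∈ (0,1) with F_a(z) = 0. Then there exists a nonconstant C² solution x: ℝ → ℝ of x″ = x(x−1)(x−a) such that (x(t), x′(t)) → (0,0) as t → ±∞, 0 < x(t) ≤ z_a for all t ∈ ℝ, and max_{t∈ℝ} x(t) = z_a (a homoclinic orbit to (0,0) crossing the positive x-semiaxis at (z_a, 0)). -/

import Mathlib

open Filter Set

noncomputable section

/-- The potential `F_a(x) = -x⁴/4 + (1+a)x³/3 - a x²/2`. -/
def Fa (a x : ℝ) : ℝ := -x ^ 4 / 4 + (1 + a) * x ^ 3 / 3 - a * x ^ 2 / 2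

/-- `x` is a (C²) solution of the autonomous equation `x'' = x(x-1)(x-a)`,
with derivative `dx`. -/
def IsAutSol (a : ℝ) (x dx : ℝ → ℝ) : Prop :=
  (∀ t : ℝ, HasDerivAt x (dx t) t) ∧
  (∀ t : ℝ, HasDerivAt dx (x t * (x t - 1) * (x t - a)) t)

lemma cosh_tendsto_atTop : Tendsto Real.cosh atTop atTop := by
  apply tendsto_atTop_mono (f := fun x => (1 + x) / 2)
  · intro x
    rw [Real.cosh_eq]
    nlinarith [Real.add_one_le_exp x, (Real.exp_pos (-x)).le]
  · apply Tendsto.atTop_div_const (by norm_num)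
    exact tendsto_atTop_add_const_left _ _ tendsto_id

lemma cosh_tendsto_atBot : Tendsto Real.cosh atBot atTop := by
  have h := cosh_tendsto_atTop.comp tendsto_neg_atBot_atTop
  have h2 : Real.cosh ∘ Neg.neg = Real.cosh := funext fun x => Real.cosh_neg x
  rwa [h2] at h

set_option maxHeartbeats 1000000 in
theorem stmt_16 (a za : ℝ) (h0 : 0 < a) (h1 : a < 1 / 2)
    (hza : za ∈ Set.Ioo (0:ℝ) 1) (hFza : Fa a za = 0)
    (hzauniq : ∀ z ∈ Set.Ioo (0:ℝ) 1, Fa a z = 0 → z = za) :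
    ∃ x dx : ℝ → ℝ, IsAutSol a x dx ∧
      -- nonconstant
      (∃ t₁ t₂ : ℝ, x t₁ ≠ x t₂) ∧
      -- homoclinic to (0,0)
      Tendsto (fun t => (x t, dx t)) atBot (nhds ((0:ℝ), (0:ℝ))) ∧
      Tendsto (fun t => (x t, dx t)) atTop (nhds ((0:ℝ), (0:ℝ))) ∧
      -- 0 < x(t) ≤ z_a, with maximum value z_a attained
      (∀ t : ℝ, 0 < x t ∧ x t ≤ za) ∧
      (∃ t : ℝ, x t = za) := by
  have hden : 0 < (1 - 2*a) * (2 - a) := by nlinarith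
  set ω : ℝ := Real.sqrt a with hωdef
  set q : ℝ := Real.sqrt (2*(1+a)^2 / ((1 - 2*a) * (2 - a))) with hqdef
  set p : ℝ := 3*a*q/(1+a) with hpdef
  have hω0 : 0 < ω := Real.sqrt_pos.mpr h0
  have hω2 : ω^2 = a := Real.sq_sqrt h0.le
  have hqarg : 0 < 2*(1+a)^2 / ((1 - 2*a) * (2 - a)) := by positivity
  have hq0 : 0 < q := Real.sqrt_pos.mpr hqarg
  have hq2 : q^2 = 2*(1+a)^2 / ((1 - 2*a) * (2 - a)) := Real.sq_sqrt hqarg.le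
  have hq2gt : 1 < q^2 := by
    rw [hq2, lt_div_iff₀ hden]; nlinarith
  have hq1 : 1 < q := by nlinarith [hq2gt, hq0]
  have hp0 : 0 < p := by
    rw [hpdef]; positivity
  have h1a : (1+a) ≠ 0 := by positivity
  have hA : (1+a)*p = 3*a*q := by
    rw [hpdef]; field_simp
  have hB : p^2 = 2*a*q^2 - 2*a := by
    have hq2' : q^2 * ((1-2*a)*(2-a)) = 2*(1+a)^2 := by
      rw [hq2]; field_simp; exact div_self hden.ne'
    have hp2 : p^2*(1+a)^2 = 9*a^2*q^2 := by
      rw [hpdef]; field_simp; ring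
    have hE : (p^2 - (2*a*q^2-2*a)) * ((1+a)^2 * ((1-2*a)*(2-a))) = 0 := by
      linear_combination ((1-2*a)*(2-a)) * hp2 + (9*a^2 - 2*a*(1+a)^2) * hq2'
    have hne : ((1+a)^2 * ((1-2*a)*(2-a))) ≠ 0 := by positivity
    have := (mul_eq_zero.mp hE).resolve_right hne
    linarith
  set x : ℝ → ℝ := fun t => p / (Real.cosh (ω*t) + q) with hxdef
  set dx : ℝ → ℝ := fun t => -(p*ω*Real.sinh (ω*t)) / (Real.cosh (ω*t) + q)^2 with hdxdef
  have hdent : ∀ t : ℝ, 0 < Real.cosh (ω*t) + q := fun t => by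
    have := Real.one_le_cosh (ω*t); linarith
  have hx0 : ∀ t, 0 < x t := fun t => div_pos hp0 (hdent t)
  -- first derivative
  have hderiv1 : ∀ t : ℝ, HasDerivAt x (dx t) t := by
    intro t
    have hlin : HasDerivAt (fun t : ℝ => ω * t) ω t := by
      simpa using (hasDerivAt_id t).const_mul ω
    have hg : HasDerivAt (fun t : ℝ => Real.cosh (ω*t) + q)
        (Real.sinh (ω*t) * ω) t :=
      ((Real.hasDerivAt_cosh (ω*t)).comp t hlin).add_const q
    have := (hasDerivAt_const t p).fun_div hg (hdent t).ne'
    refine this.congr_deriv (Eq.symm ?_)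
    rw [hdxdef]
    have h := (hdent t).ne'
    field_simp
    ring
  -- second derivative
  have hderiv2 : ∀ t : ℝ, HasDerivAt dx (x t * (x t - 1) * (x t - a)) t := by
    intro t
    have hlin : HasDerivAt (fun t : ℝ => ω * t) ω t := by
      simpa using (hasDerivAt_id t).const_mul ω
    have hnum : HasDerivAt (fun t : ℝ => -(p*ω*Real.sinh (ω*t)))
        (-(p*ω*(Real.cosh (ω*t) * ω))) t :=
      (((Real.hasDerivAt_sinh (ω*t)).comp t hlin).const_mul (p*ω)).neg
    have hg : HasDerivAt (fun t : ℝ => Real.cosh (ω*t) + q)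
        (Real.sinh (ω*t) * ω) t :=
      ((Real.hasDerivAt_cosh (ω*t)).comp t hlin).add_const q
    have hgsq : HasDerivAt (fun t : ℝ => (Real.cosh (ω*t) + q)^2)
        (2 * (Real.cosh (ω*t) + q) * (Real.sinh (ω*t) * ω)) t := by
      simpa [mul_comm, mul_assoc, mul_left_comm] using (hg.fun_pow 2)
    have hden2 : ((Real.cosh (ω*t) + q)^2) ≠ 0 := by positivity
    have hdd := hnum.fun_div hgsq hden2
    refine hdd.congr_deriv (Eq.symm ?_)
    set u := Real.cosh (ω*t) with hu
    set s := Real.sinh (ω*t) with hs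
    have hs2 : s^2 = u^2 - 1 := by
      have := Real.cosh_sq (ω*t); rw [← hu, ← hs] at this; linarith
    have hu0 : 0 < u + q := hdent t
    show p/(u+q) * (p/(u+q) - 1) * (p/(u+q) - a)
      = (-(p*ω*(u*ω)) * (u+q)^2 - -(p*ω*s) * (2*(u+q)*(s*ω))) / ((u+q)^2)^2
    have h1 : p/(u+q) * (p/(u+q) - 1) * (p/(u+q) - a)
        = (p*(p-(u+q))*(p-a*(u+q))) / (u+q)^3 := by
      have := hu0.ne'
      field_simp
    rw [h1, div_eq_div_iff (by positivity) (by positivity)]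
    linear_combination (-(2*p*ω^2*(u+q)^4)) * hs2 + (-(p*(u+q)^4*(u^2-q*u-2))) * hω2
      + (-(p*(u+q)^5)) * hA + (p*(u+q)^4) * hB
  -- the maximum value
  set m : ℝ := p / (1 + q) with hmdef
  have h1q : (0:ℝ) < 1 + q := by linarith
  have hFm : Fa a m = 0 := by
    have hP : -3*p^4 + 4*(1+a)*p^3*(1+q) - 6*a*p^2*(1+q)^2 = 0 := by
      linear_combination (4*p^2*(1+q))*hA + (-3*p^2)*hB
    have h2 : Fa a m = (-3*p^4 + 4*(1+a)*p^3*(1+q) - 6*a*p^2*(1+q)^2) / (12*(1+q)^4) := by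
      rw [Fa, hmdef]
      have := h1q.ne'
      field_simp
      ring
    rw [h2, hP]
    simp
  have hm0 : 0 < m := div_pos hp0 h1q
  have hm1 : m < 1 := by
    rw [hmdef, div_lt_one h1q, hpdef, div_lt_iff₀ (by positivity : (0:ℝ) < 1+a)]
    nlinarith
  have hmza : m = za := hzauniq m ⟨hm0, hm1⟩ hFm
  have hxm : ∀ t, x t ≤ za := by
    intro t
    rw [← hmza, hmdef, hxdef]
    have : (1:ℝ) + q ≤ Real.cosh (ω*t) + q := by
      have := Real.one_le_cosh (ω*t); linarith
    exact div_le_div_of_nonneg_left hp0.le h1q this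
  have hx0za : x 0 = za := by
    rw [← hmza, hxdef, hmdef]
    norm_num
  -- limits
  have hcoshT : Tendsto (fun t : ℝ => Real.cosh (ω*t) + q) atTop atTop := by
    apply tendsto_atTop_add_const_right
    exact cosh_tendsto_atTop.comp ((tendsto_const_mul_atTop_of_pos hω0).mpr tendsto_id)
  have hcoshB : Tendsto (fun t : ℝ => Real.cosh (ω*t) + q) atBot atTop := by
    apply tendsto_atTop_add_const_right
    exact cosh_tendsto_atBot.comp ((tendsto_const_mul_atBot_of_pos hω0).mpr tendsto_id)
  have hxlim : ∀ l : Filter ℝ, Tendsto (fun t : ℝ => Real.cosh (ω*t) + q) l atTop →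
      Tendsto (fun t => (x t, dx t)) l (nhds ((0:ℝ),(0:ℝ))) := by
    intro l hl
    have hx : Tendsto x l (nhds 0) := Tendsto.div_atTop tendsto_const_nhds hl
    have hbd : Tendsto (fun t => p*ω / (Real.cosh (ω*t) + q)) l (nhds 0) :=
      Tendsto.div_atTop tendsto_const_nhds hl
    have hdx : Tendsto dx l (nhds 0) := by
      apply squeeze_zero_norm _ hbd
      intro t
      have hd := hdent t
      have hu1 := Real.one_le_cosh (ω*t)
      have hcs := Real.cosh_sq (ω*t)
      have habs : |Real.sinh (ω*t)| ≤ Real.cosh (ω*t) + q := by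
        rw [abs_le]
        constructor <;> nlinarith
      have heq : ‖dx t‖ = p*ω*|Real.sinh (ω*t)| / (Real.cosh (ω*t)+q)^2 := by
        simp only [hdxdef, Real.norm_eq_abs, abs_div, abs_neg, abs_mul,
          abs_of_pos hp0, abs_of_pos hω0, abs_of_pos (pow_pos hd 2)]
      rw [heq, show p*ω/(Real.cosh (ω*t)+q) = p*ω*(Real.cosh (ω*t)+q)/(Real.cosh (ω*t)+q)^2
        from by rw [pow_two]; field_simp]
      gcongr
    exact hx.prodMk_nhds hdx
  -- nonconstant
  have hnc : x 1 ≠ x 0 := by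
    have hcosh1 : 1 < Real.cosh (ω*1) := Real.one_lt_cosh.mpr (by simpa using hω0.ne')
    have hlt : x 1 < x 0 := by
      rw [hxdef]
      simp only [mul_zero, Real.cosh_zero]
      exact div_lt_div_of_pos_left hp0 h1q (by linarith [Real.one_le_cosh (ω*1)])
    exact hlt.ne
  exact ⟨x, dx, ⟨hderiv1, hderiv2⟩, ⟨1, 0, hnc⟩, hxlim _ hcoshB, hxlim _ hcoshT,
    fun t => ⟨hx0 t, hxm t⟩, ⟨0, hx0za⟩⟩
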